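/- Let β > 0. For every α > 0: 0 < (1+α)·J(1; β/(1+α)) − J(1; β) < α ln 2, and 0 < sup_{t∈(0,1)} [α h(t) + J(r_{t,β}; β) − t ln r_{t,β}] − J(1; β) < α ln 2. (Equivalently, 0 < Λ_N(α) < α ln 2 and 0 < Λ_Z(α) < α ln 2 for α > 0.) -/

import Mathlib

/-- `J(r;γ) = ∫₀¹ ln(1 + r e^{−γx}) dx`. -/
noncomputable def Jint (r γ : ℝ) : ℝ :=
  ∫ x in (0:ℝ)..1, Real.log (1 + r * Real.exp (-γ * x))

/-- `r_{t,β} = (e^{βt} − 1)/(1 − e^{β(t−1)})`. -/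
noncomputable def rtβ (t β : ℝ) : ℝ :=
  (Real.exp (β * t) - 1) / (1 - Real.exp (β * (t - 1)))

/-- The binary entropy function (in nats). -/
noncomputable def binEnt (t : ℝ) : ℝ := -t * Real.log t - (1 - t) * Real.log (1 - t)

open Real Set MeasureTheory intervalIntegral

lemma pos_aux {r γ : ℝ} (hr : 0 ≤ r) (x : ℝ) : 0 < 1 + r * Real.exp (-γ * x) := by
  positivity

lemma cont_aux {r γ : ℝ} (hr : 0 ≤ r) :
    Continuous (fun x : ℝ => Real.log (1 + r * Real.exp (-γ * x))) := by
  apply Continuous.log (by continuity)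
  exact fun x => (pos_aux hr x).ne'

/-- scalar tangent-line inequality for softplus, via weighted AM-GM -/
lemma tangent_aux {a b : ℝ} (ha : 0 < a) (hb : 0 < b) :
    Real.log (1 + a) - Real.log (1 + b) ≤ a / (1 + a) * (Real.log a - Real.log b) := by
  have h1a : (0:ℝ) < 1 + a := by linarith
  have hc : (0:ℝ) ≤ a / (1 + a) := by positivity
  have hd : (0:ℝ) ≤ 1 / (1 + a) := by positivity
  have hw : a / (1 + a) + 1 / (1 + a) = 1 := by field_simp; ring
  have hp₁ : (0:ℝ) ≤ b * (1 + a) / a := by positivity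
  have hp₂ : (0:ℝ) ≤ 1 + a := by linarith
  have amgm := Real.geom_mean_le_arith_mean2_weighted hc hd hp₁ hp₂ hw
  have hsum : a / (1 + a) * (b * (1 + a) / a) + 1 / (1 + a) * (1 + a) = 1 + b := by
    field_simp
    ring
  rw [hsum] at amgm
  -- take logs
  have hlhs : Real.log ((b * (1 + a) / a) ^ (a / (1+a)) * (1 + a) ^ (1 / (1+a)))
      = a/(1+a) * (Real.log b + Real.log (1+a) - Real.log a) + 1/(1+a) * Real.log (1+a) := by
    rw [Real.log_mul (by positivity) (by positivity), Real.log_rpow (by positivity),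
      Real.log_rpow h1a, Real.log_div (by positivity) ha.ne', Real.log_mul hb.ne' h1a.ne']
  have hlog := Real.log_le_log (by positivity) amgm
  rw [hlhs] at hlog
  have expand : a/(1+a) * (Real.log b + Real.log (1+a) - Real.log a) + 1/(1+a) * Real.log (1+a)
      = Real.log (1+a) * (a/(1+a) + 1/(1+a)) - a/(1+a) * (Real.log a - Real.log b) := by ring
  rw [expand, hw] at hlog
  linarith


lemma cont_frac {r γ : ℝ} (hr : 0 ≤ r) :
    Continuous (fun x : ℝ => r * Real.exp (-γ * x) / (1 + r * Real.exp (-γ * x))) := by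
  apply Continuous.div (by continuity) (by continuity)
  exact fun x => (pos_aux hr x).ne'

/-- FTC computation of `∫₀¹ r e^{−γx}/(1+re^{−γx}) dx`. -/
lemma ftc_frac {r γ : ℝ} (hr : 0 < r) (hγ : 0 < γ) :
    ∫ x in (0:ℝ)..1, r * Real.exp (-γ * x) / (1 + r * Real.exp (-γ * x))
      = (Real.log (1 + r) - Real.log (1 + r * Real.exp (-γ))) / γ := by
  have hderiv : ∀ x ∈ uIcc (0:ℝ) 1,
      HasDerivAt (fun x : ℝ => -(Real.log (1 + r * Real.exp (-γ * x))) / γ)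
        (r * Real.exp (-γ * x) / (1 + r * Real.exp (-γ * x))) x := by
    intro x _
    have h1 : HasDerivAt (fun x : ℝ => -γ * x) (-γ) x := by
      simpa using (hasDerivAt_id x).const_mul (-γ)
    have h2 : HasDerivAt (fun x : ℝ => Real.exp (-γ * x)) (Real.exp (-γ * x) * -γ) x :=
      (Real.hasDerivAt_exp _).comp x h1
    have h3 : HasDerivAt (fun x : ℝ => 1 + r * Real.exp (-γ * x))
        (r * (Real.exp (-γ * x) * -γ)) x := (h2.const_mul r).const_add 1
    have h4 : HasDerivAt (fun x : ℝ => Real.log (1 + r * Real.exp (-γ * x)))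
        ((1 + r * Real.exp (-γ * x))⁻¹ * (r * (Real.exp (-γ * x) * -γ))) x := by
      have := (Real.hasDerivAt_log (pos_aux hr.le x).ne').comp x h3; exact this
    have h5 : HasDerivAt (fun x : ℝ => -(Real.log (1 + r * Real.exp (-γ * x))) / γ)
        (-((1 + r * Real.exp (-γ * x))⁻¹ * (r * (Real.exp (-γ * x) * -γ))) / γ) x :=
      (h4.neg).div_const γ
    convert h5 using 1
    have := (pos_aux (γ := γ) hr.le x).ne'
    field_simp
  rw [integral_eq_sub_of_hasDerivAt hderiv ((cont_frac hr.le).intervalIntegrable _ _)]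
  simp only [mul_one, mul_zero, neg_zero, Real.exp_zero, mul_one, neg_mul]
  field_simp
  ring


/-- Key convexity bound on differences of `Jint`. -/
lemma Jint_sub_le {r ρ β : ℝ} (hr : 0 < r) (hρ : 0 < ρ) (hβ : 0 < β) :
    Jint r β - Jint ρ β
      ≤ (Real.log r - Real.log ρ) * ((Real.log (1 + r) - Real.log (1 + r * Real.exp (-β))) / β) := by
  have hint : ∀ s : ℝ, 0 ≤ s → IntervalIntegrable
      (fun x : ℝ => Real.log (1 + s * Real.exp (-β * x))) volume 0 1 :=
    fun s hs => (cont_aux hs).intervalIntegrable _ _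
  have key : Jint r β - Jint ρ β
      = ∫ x in (0:ℝ)..1, (Real.log (1 + r * Real.exp (-β * x)) - Real.log (1 + ρ * Real.exp (-β * x))) := by
    rw [Jint, Jint, ← integral_sub (hint r hr.le) (hint ρ hρ.le)]
  rw [key]
  have mono : ∀ x ∈ Icc (0:ℝ) 1,
      Real.log (1 + r * Real.exp (-β * x)) - Real.log (1 + ρ * Real.exp (-β * x))
        ≤ (Real.log r - Real.log ρ) * (r * Real.exp (-β * x) / (1 + r * Real.exp (-β * x))) := by
    intro x _
    have ha : 0 < r * Real.exp (-β * x) := by positivity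
    have hb : 0 < ρ * Real.exp (-β * x) := by positivity
    have := tangent_aux ha hb
    have hla : Real.log (r * Real.exp (-β * x)) - Real.log (ρ * Real.exp (-β * x))
        = Real.log r - Real.log ρ := by
      rw [Real.log_mul hr.ne' (Real.exp_ne_zero _), Real.log_mul hρ.ne' (Real.exp_ne_zero _)]
      ring
    rw [hla] at this
    calc Real.log (1 + r * Real.exp (-β * x)) - Real.log (1 + ρ * Real.exp (-β * x))
        ≤ r * Real.exp (-β * x) / (1 + r * Real.exp (-β * x)) * (Real.log r - Real.log ρ) := this
      _ = (Real.log r - Real.log ρ) * (r * Real.exp (-β * x) / (1 + r * Real.exp (-β * x))) := by ring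
  calc (∫ x in (0:ℝ)..1, (Real.log (1 + r * Real.exp (-β * x)) - Real.log (1 + ρ * Real.exp (-β * x))))
      ≤ ∫ x in (0:ℝ)..1, (Real.log r - Real.log ρ) * (r * Real.exp (-β * x) / (1 + r * Real.exp (-β * x))) := by
        apply integral_mono_on (by norm_num) ((hint r hr.le).sub (hint ρ hρ.le))
          ((continuous_const.mul (cont_frac hr.le)).intervalIntegrable _ _) mono
    _ = (Real.log r - Real.log ρ) * ((Real.log (1 + r) - Real.log (1 + r * Real.exp (-β))) / β) := by
        rw [intervalIntegral.integral_const_mul, ftc_frac hr hβ]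

/-- positivity of `rtβ` and the key identity. -/
lemma rt_pos {t β : ℝ} (ht : t ∈ Ioo (0:ℝ) 1) (hβ : 0 < β) : 0 < rtβ t β := by
  have h1 : (1:ℝ) < Real.exp (β * t) := Real.one_lt_exp_iff.2 (by nlinarith [ht.1])
  have h2 : Real.exp (β * (t - 1)) < 1 := Real.exp_lt_one_iff.2 (by nlinarith [ht.2])
  exact div_pos (by linarith) (by linarith)

lemma rt_identity {t β : ℝ} (ht : t ∈ Ioo (0:ℝ) 1) (hβ : 0 < β) :
    Real.log (1 + rtβ t β) - Real.log (1 + rtβ t β * Real.exp (-β)) = β * t := by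
  have h2 : Real.exp (β * (t - 1)) < 1 := Real.exp_lt_one_iff.2 (by nlinarith [ht.2])
  have hD : Real.exp (β * (t - 1)) = Real.exp (β * t) * Real.exp (-β) := by
    rw [← Real.exp_add]; ring_nf
  have hden : (0:ℝ) < 1 - Real.exp (β * (t - 1)) := by linarith
  have hr := rt_pos ht hβ
  have key : 1 + rtβ t β = Real.exp (β * t) * (1 + rtβ t β * Real.exp (-β)) := by
    rw [rtβ]
    field_simp
    nlinarith [hD, Real.exp_pos (β*t), Real.exp_pos (-β)]
  have hpos2 : (0:ℝ) < 1 + rtβ t β * Real.exp (-β) := by positivity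
  rw [key, Real.log_mul (Real.exp_pos _).ne' hpos2.ne', Real.log_exp]
  ring


/-- Gibbs: `h(t) ≤ t c + log(1+e^{−c})`. -/
lemma gibbs {t c : ℝ} (ht : t ∈ Ioo (0:ℝ) 1) :
    binEnt t ≤ t * c + Real.log (1 + Real.exp (-c)) := by
  obtain ⟨ht0, ht1⟩ := ht
  have ht1' : (0:ℝ) < 1 - t := by linarith
  have hec : (0:ℝ) < 1 + Real.exp c := by positivity
  set q : ℝ := 1 / (1 + Real.exp c) with hq
  have hq0 : 0 < q := by positivity
  have hq1 : q < 1 := by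
    rw [hq, div_lt_one hec]; nlinarith [Real.exp_pos c]
  have conc := (strictConcaveOn_log_Ioi.concaveOn).2 (x := q / t) (y := (1 - q) / (1 - t))
    (mem_Ioi.2 (by positivity)) (mem_Ioi.2 (div_pos (by linarith) ht1')) ht0.le ht1'.le (by ring)
  have hsum : t • (q / t) + (1 - t) • ((1 - q) / (1 - t)) = 1 := by
    rw [smul_eq_mul, smul_eq_mul]
    field_simp
    ring
  rw [hsum, Real.log_one, smul_eq_mul, smul_eq_mul] at conc
  rw [Real.log_div hq0.ne' ht0.ne', Real.log_div (by linarith) ht1'.ne'] at conc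
  -- conc : t * (log q - log t) + (1-t) * (log (1-q) - log (1-t)) ≤ 0
  have hlogq : Real.log q = -(c + Real.log (1 + Real.exp (-c))) := by
    rw [hq, Real.log_div one_ne_zero hec.ne', Real.log_one]
    have : (1:ℝ) + Real.exp c = Real.exp c * (1 + Real.exp (-c)) := by
      rw [mul_add, mul_one, ← Real.exp_add]; simp [add_comm]
    rw [this, Real.log_mul (Real.exp_pos c).ne' (by positivity), Real.log_exp]
    ring
  have hlog1q : Real.log (1 - q) = -Real.log (1 + Real.exp (-c)) := by
    have : (1:ℝ) - q = Real.exp c / (1 + Real.exp c) := by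
      rw [hq]; field_simp; ring
    rw [this, Real.log_div (Real.exp_pos c).ne' hec.ne', Real.log_exp]
    have h2 : (1:ℝ) + Real.exp c = Real.exp c * (1 + Real.exp (-c)) := by
      rw [mul_add, mul_one, ← Real.exp_add]; simp [add_comm]
    rw [h2, Real.log_mul (Real.exp_pos c).ne' (by positivity), Real.log_exp]
    ring
  rw [hlogq, hlog1q] at conc
  unfold binEnt
  nlinarith [conc]

/-- softplus upper bound. -/
lemma softplus_le {c : ℝ} (hc : 0 < c) :
    Real.log (1 + Real.exp (-c)) ≤ Real.log 2 - c / (1 + Real.exp c) := by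
  have h := tangent_aux (a := Real.exp (-c)) (b := 1) (Real.exp_pos _) one_pos
  rw [Real.log_exp, Real.log_one] at h
  have key : Real.exp (-c) / (1 + Real.exp (-c)) = 1 / (1 + Real.exp c) := by
    rw [div_eq_div_iff (by positivity) (by positivity)]
    rw [mul_add, mul_one, ← Real.exp_add]
    simp
    ring
  rw [key] at h
  have : Real.log (1 + 1) = Real.log 2 := by norm_num
  rw [this] at h
  have : 1 / (1 + Real.exp c) * (-c - 0) = -(c / (1 + Real.exp c)) := by ring
  rw [this] at h
  linarith


lemma pw_low {s z : ℝ} (hs : 1 < s) (hz0 : 0 < z) (hz1 : z ≤ 1) :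
    Real.log (1 + z ^ s) < s * Real.log (1 + z) := by
  have h1 : z ^ s ≤ z := by
    simpa using Real.rpow_le_rpow_of_exponent_ge hz0 hz1 hs.le
  have h2 : (1:ℝ) + s * z ≤ (1 + z) ^ s := one_add_mul_self_le_rpow_one_add (by linarith) hs.le
  have h3 : z < s * z := by nlinarith
  have key : 1 + z ^ s < (1 + z) ^ s := by linarith
  calc Real.log (1 + z ^ s) < Real.log ((1 + z) ^ s) :=
        Real.log_lt_log (by positivity) key
    _ = s * Real.log (1 + z) := Real.log_rpow (by positivity) s

lemma pw_up {s z : ℝ} (hs : 1 < s) (hz0 : 0 < z) (hz1 : z ≤ 1) :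
    s * Real.log (1 + z) ≤ (s - 1) * Real.log 2 + Real.log (1 + z ^ s) := by
  have hconv := (convexOn_rpow hs.le).2 (x := (1:ℝ)) (y := z)
    (by simp) (mem_Ici.2 hz0.le) (by norm_num : (0:ℝ) ≤ 1/2) (by norm_num : (0:ℝ) ≤ 1/2) (by norm_num)
  simp only [smul_eq_mul, Real.one_rpow] at hconv
  -- hconv : (1/2*1 + 1/2*z)^s ≤ 1/2*1 + 1/2*z^s
  have key : (1 + z) ^ s ≤ 2 ^ (s-1) * (1 + z ^ s) := by
    have h2 : (1 + z : ℝ) = 2 * (1/2*1 + 1/2*z) := by ring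
    rw [h2, Real.mul_rpow (by norm_num) (by positivity)]
    have : (2:ℝ) ^ s = 2 ^ (s-1) * 2 := by
      rw [← Real.rpow_add_one (by norm_num) (s-1)]; ring_nf
    rw [this]
    nlinarith [Real.rpow_pos_of_pos (show (0:ℝ) < 2 by norm_num) (s-1), hconv,
      Real.rpow_nonneg (show (0:ℝ) ≤ 1/2*1 + 1/2*z by linarith) s]
  calc s * Real.log (1 + z) = Real.log ((1 + z) ^ s) := (Real.log_rpow (by positivity) s).symm
    _ ≤ Real.log (2 ^ (s-1) * (1 + z ^ s)) := Real.log_le_log (by positivity) key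
    _ = (s - 1) * Real.log 2 + Real.log (1 + z ^ s) := by
        rw [Real.log_mul (by positivity) (by positivity), Real.log_rpow (by norm_num)]

lemma pw_up_strict {s z : ℝ} (hs : 1 < s) (hz0 : 0 < z) (hz1 : z < 1) :
    s * Real.log (1 + z) < (s - 1) * Real.log 2 + Real.log (1 + z ^ s) := by
  have hconv := (strictConvexOn_rpow hs).2 (x := (1:ℝ)) (y := z)
    (by simp) (mem_Ici.2 hz0.le) (by linarith : (1:ℝ) ≠ z)
    (by norm_num : (0:ℝ) < 1/2) (by norm_num : (0:ℝ) < 1/2) (by norm_num)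
  simp only [smul_eq_mul, Real.one_rpow] at hconv
  have key : (1 + z) ^ s < 2 ^ (s-1) * (1 + z ^ s) := by
    have h2 : (1 + z : ℝ) = 2 * (1/2*1 + 1/2*z) := by ring
    rw [h2, Real.mul_rpow (by norm_num) (by positivity)]
    have : (2:ℝ) ^ s = 2 ^ (s-1) * 2 := by
      rw [← Real.rpow_add_one (by norm_num) (s-1)]; ring_nf
    rw [this]
    nlinarith [Real.rpow_pos_of_pos (show (0:ℝ) < 2 by norm_num) (s-1), hconv,
      Real.rpow_nonneg (show (0:ℝ) ≤ 1/2*1 + 1/2*z by linarith) s]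
  calc s * Real.log (1 + z) = Real.log ((1 + z) ^ s) := (Real.log_rpow (by positivity) s).symm
    _ < Real.log (2 ^ (s-1) * (1 + z ^ s)) := Real.log_lt_log (by positivity) key
    _ = (s - 1) * Real.log 2 + Real.log (1 + z ^ s) := by
        rw [Real.log_mul (by positivity) (by positivity), Real.log_rpow (by norm_num)]


lemma part1 {β α : ℝ} (hβ : 0 < β) (hα : 0 < α) :
    0 < (1 + α) * Jint 1 (β / (1 + α)) - Jint 1 β ∧
      (1 + α) * Jint 1 (β / (1 + α)) - Jint 1 β < α * Real.log 2 := by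
  set s : ℝ := 1 + α with hs_def
  have hs : 1 < s := by simp [hs_def]; linarith
  have hs0 : (0:ℝ) < s := by linarith
  set γ : ℝ := β / s with hγ_def
  have hγ : 0 < γ := by positivity
  -- the exponent identity
  have hzs : ∀ x : ℝ, (Real.exp (-γ * x)) ^ s = Real.exp (-β * x) := by
    intro x
    rw [← Real.exp_mul]
    congr 1
    rw [hγ_def]; field_simp
  -- rewrite the first term
  have h1 : (1 + α) * Jint 1 γ = ∫ x in (0:ℝ)..1, s * Real.log (1 + Real.exp (-γ * x)) := by
    rw [Jint, ← intervalIntegral.integral_const_mul]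
    simp [hs_def]
  have hcont1 : Continuous (fun x : ℝ => s * Real.log (1 + Real.exp (-γ * x))) := by
    have := cont_aux (r := 1) (γ := γ) zero_le_one
    exact continuous_const.mul (by simpa using this)
  have hcont2 : Continuous (fun x : ℝ => Real.log (1 + Real.exp (-β * x))) := by
    have := cont_aux (r := 1) (γ := β) zero_le_one
    simpa using this
  have hdiffint : (1 + α) * Jint 1 γ - Jint 1 β
      = ∫ x in (0:ℝ)..1, (s * Real.log (1 + Real.exp (-γ * x)) - Real.log (1 + Real.exp (-β * x))) := by
    rw [h1, Jint, ← intervalIntegral.integral_sub (hcont1.intervalIntegrable _ _)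
      ((cont_aux (r := 1) (γ := β) zero_le_one).intervalIntegrable _ _)]
    simp
  have hz : ∀ x : ℝ, 0 < Real.exp (-γ * x) := fun x => Real.exp_pos _
  have hz1 : ∀ x : ℝ, 0 ≤ x → Real.exp (-γ * x) ≤ 1 :=
    fun x hx => Real.exp_le_one_iff.2 (by nlinarith)
  constructor
  · rw [hdiffint]
    apply intervalIntegral.integral_pos one_pos ((hcont1.sub hcont2).continuousOn)
    · intro x hx
      have := pw_low hs (hz x) (hz1 x hx.1.le)
      rw [hzs x] at this
      simp only [Pi.sub_apply]; linarith
    · refine ⟨1, by norm_num, ?_⟩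
      have := pw_low hs (hz 1) (hz1 1 zero_le_one)
      rw [hzs 1] at this
      simp only [Pi.sub_apply]; linarith
  · rw [hdiffint]
    have hconst : α * Real.log 2 = ∫ _x in (0:ℝ)..1, α * Real.log 2 := by simp
    rw [hconst]
    apply intervalIntegral.integral_lt_integral_of_continuousOn_of_le_of_exists_lt one_pos
      ((hcont1.sub hcont2).continuousOn) continuousOn_const
    · intro x hx
      have hzlt1 : Real.exp (-γ * x) < 1 := Real.exp_lt_one_iff.2 (by nlinarith [hx.1])
      have := pw_up_strict hs (hz x) hzlt1
      rw [hzs x] at this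
      have hsm : s - 1 = α := by simp [hs_def]
      rw [hsm] at this
      simp only [Pi.sub_apply]; linarith
    · refine ⟨1, by norm_num, ?_⟩
      have hzlt1 : Real.exp (-γ * 1) < 1 := Real.exp_lt_one_iff.2 (by nlinarith)
      have := pw_up_strict hs (hz 1) hzlt1
      rw [hzs 1] at this
      have hsm : s - 1 = α := by simp [hs_def]
      rw [hsm] at this
      simp only [Pi.sub_apply]; linarith


set_option maxHeartbeats 1000000 in
lemma part2 {β α : ℝ} (hβ : 0 < β) (hα : 0 < α) :
    0 < (⨆ t : Set.Ioo (0:ℝ) 1,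
          (α * binEnt t + Jint (rtβ t β) β - (t : ℝ) * Real.log (rtβ t β))) - Jint 1 β ∧
      (⨆ t : Set.Ioo (0:ℝ) 1,
          (α * binEnt t + Jint (rtβ t β) β - (t : ℝ) * Real.log (rtβ t β))) - Jint 1 β
        < α * Real.log 2 := by
  have hne : Nonempty (Set.Ioo (0:ℝ) 1) := ⟨⟨1/2, by norm_num, by norm_num⟩⟩
  have heβ1 : Real.exp (-β) < 1 := Real.exp_lt_one_iff.2 (by linarith)
  have heβ0 : 0 < Real.exp (-β) := Real.exp_pos _
  -- the maximizing point t⋆ and gap ε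
  obtain ⟨ts, hts_def⟩ : ∃ x : ℝ, x = Real.log (2 / (1 + Real.exp (-β))) / β := ⟨_, rfl⟩
  have hts_pos : 0 < ts := by
    rw [hts_def]
    apply div_pos _ hβ
    apply Real.log_pos
    rw [lt_div_iff₀ (by linarith)]
    linarith
  have hbts : β * ts = Real.log (2 / (1 + Real.exp (-β))) := by
    rw [hts_def]; field_simp
  have hts_half : ts < 1/2 := by
    rw [hts_def, div_lt_iff₀ hβ]
    have hw : (1:ℝ) < Real.exp (β/2) := Real.one_lt_exp_iff.2 (by linarith)
    have hwi : Real.exp (β/2) * Real.exp (-(β/2)) = 1 := by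
      rw [← Real.exp_add]; simp
    have h2 : 2 / (1 + Real.exp (-β)) < Real.exp (β/2) := by
      rw [div_lt_iff₀ (by linarith)]
      have hsplit : Real.exp (β/2) * (1 + Real.exp (-β)) = Real.exp (β/2) + Real.exp (-(β/2)) := by
        rw [mul_add, mul_one, ← Real.exp_add]; ring_nf
      rw [hsplit]
      nlinarith [Real.exp_pos (-(β/2))]
    calc Real.log (2 / (1 + Real.exp (-β))) < Real.log (Real.exp (β/2)) :=
          Real.log_lt_log (by positivity) h2
      _ = 1/2 * β := by rw [Real.log_exp]; ring
  have hts_mem : ts ∈ Ioo (0:ℝ) 1 := ⟨hts_pos, by linarith⟩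
  obtain ⟨ε, hε_def⟩ : ∃ x : ℝ, x = 1/2 - ts := ⟨_, rfl⟩
  have hε_pos : 0 < ε := by rw [hε_def]; linarith
  have hε_le : ε ≤ 1/2 := by rw [hε_def]; linarith
  -- r at t⋆ equals 1
  have hrts : rtβ ts β = 1 := by
    have he1 : Real.exp (β * ts) = 2 / (1 + Real.exp (-β)) := by
      rw [hbts, Real.exp_log (by positivity)]
    have he2 : Real.exp (β * (ts - 1)) = 2 * Real.exp (-β) / (1 + Real.exp (-β)) := by
      have : β * (ts - 1) = β * ts + (-β) := by ring
      rw [this, Real.exp_add, he1]; ring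
    rw [rtβ, he1, he2]
    have hne0 : 1 - 2 * Real.exp (-β) / (1 + Real.exp (-β)) = (1 - Real.exp (-β)) / (1 + Real.exp (-β)) := by
      field_simp
      ring
    rw [div_eq_one_iff_eq]
    · field_simp
      ring
    · rw [hne0]
      exact (div_pos (by linarith) (by linarith)).ne'
  -- choose u₀
  obtain ⟨u, hu_def⟩ : ∃ x : ℝ, x = min (α*ε/2) (min (β*ε/6) 1) := ⟨_, rfl⟩
  have hu_pos : 0 < u := hu_def ▸ lt_min (by positivity) (lt_min (by positivity) one_pos)
  have hu1 : u ≤ α*ε/2 := hu_def ▸ min_le_left _ _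
  have hu2 : u ≤ β*ε/6 := hu_def ▸ le_trans (min_le_right _ _) (min_le_left _ _)
  have hu3 : u ≤ 1 := hu_def ▸ le_trans (min_le_right _ _) (min_le_right _ _)
  have heu1 : (1:ℝ) ≤ Real.exp u := by
    rw [show (1:ℝ) = Real.exp 0 from (Real.exp_zero).symm]
    exact Real.exp_le_exp.2 hu_pos.le
  -- e^u - 1 ≤ 3u
  have hexp3 : Real.exp u ≤ 3 := by
    have h1 : Real.exp u ≤ Real.exp 1 := Real.exp_le_exp.2 hu3
    have := Real.exp_one_lt_d9
    linarith
  have heu3u : Real.exp u - 1 ≤ 3*u := by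
    have h1 : 1 - u ≤ Real.exp (-u) := by linarith [Real.add_one_le_exp (-u)]
    have h2 : Real.exp u * (1 - u) ≤ 1 := by
      have := mul_le_mul_of_nonneg_left h1 (Real.exp_pos u).le
      rw [← Real.exp_add] at this
      simpa using this
    nlinarith [Real.exp_pos u]
  -- Step B : Jint (exp u) β ≤ Jint 1 β + u * (ts + 3*u/(2*β))
  have hstepB : Jint (Real.exp u) β ≤ Jint 1 β + u * (ts + 3*u/(2*β)) := by
    have hB := Jint_sub_le (Real.exp_pos u) one_pos hβ
    rw [Real.log_exp, Real.log_one, sub_zero] at hB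
    have hT : (Real.log (1 + Real.exp u) - Real.log (1 + Real.exp u * Real.exp (-β))) / β
        ≤ ts + 3*u/(2*β) := by
      have hnum1 : Real.log (1 + Real.exp u) ≤ Real.log 2 + (Real.exp u - 1)/2 := by
        have hrw : (1:ℝ) + Real.exp u = 2 * (1 + (Real.exp u - 1)/2) := by ring
        rw [hrw, Real.log_mul (by norm_num) (by nlinarith [Real.exp_pos u])]
        have := Real.log_le_sub_one_of_pos (show (0:ℝ) < 1 + (Real.exp u - 1)/2 by nlinarith [Real.exp_pos u])
        linarith
      have hnum2 : Real.log (1 + Real.exp (-β)) ≤ Real.log (1 + Real.exp u * Real.exp (-β)) := by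
        apply Real.log_le_log (by positivity)
        nlinarith
      have hbts2 : β * ts = Real.log 2 - Real.log (1 + Real.exp (-β)) := by
        rw [hbts, Real.log_div (by norm_num) (by positivity)]
      rw [div_le_iff₀ hβ]
      have h3u : (Real.exp u - 1)/2 ≤ 3*u/2 := by linarith
      calc Real.log (1 + Real.exp u) - Real.log (1 + Real.exp u * Real.exp (-β))
          ≤ (Real.log 2 + (Real.exp u - 1)/2) - Real.log (1 + Real.exp (-β)) := by linarith
        _ ≤ β * ts + 3*u/2 := by rw [hbts2]; linarith
        _ = (ts + 3*u/(2*β)) * β := by field_simp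
    calc Jint (Real.exp u) β ≤ Jint 1 β + u * ((Real.log (1 + Real.exp u)
          - Real.log (1 + Real.exp u * Real.exp (-β))) / β) := by linarith
      _ ≤ Jint 1 β + u * (ts + 3*u/(2*β)) := by
          have := mul_le_mul_of_nonneg_left hT hu_pos.le
          linarith
  -- Step D : entropy bound
  have hstepD : ∀ t : ℝ, t ∈ Ioo (0:ℝ) 1 →
      α * binEnt t ≤ t * u + α * Real.log 2 - u * (1/2 - ε/2) := by
    intro t ht
    obtain ⟨c, hc_def⟩ : ∃ x : ℝ, x = u / α := ⟨_, rfl⟩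
    have hc_pos : 0 < c := by rw [hc_def]; positivity
    have hcε : c ≤ ε/2 := by
      rw [hc_def, div_le_iff₀ hα]
      calc u ≤ α*ε/2 := hu1
        _ = ε/2 * α := by ring
    have hcyc : Real.exp c * (1 - c) ≤ 1 := by
      have h1 : 1 - c ≤ Real.exp (-c) := by linarith [Real.add_one_le_exp (-c)]
      have := mul_le_mul_of_nonneg_left h1 (Real.exp_pos c).le
      rw [← Real.exp_add] at this
      simpa using this
    have hec : Real.exp c * (2-ε) ≤ 2 := by
      have hh := mul_nonneg (Real.exp_pos c).le (by linarith : (0:ℝ) ≤ ε - 2*c)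
      nlinarith [hcyc]
    have hfrac : (1:ℝ)/2 - ε/2 ≤ 1 / (1 + Real.exp c) := by
      rw [le_div_iff₀ (by positivity)]
      nlinarith [hec, mul_nonneg (Real.exp_pos c).le hε_pos.le, hε_pos.le]
    have hg := gibbs (c := c) ht
    have hsp := softplus_le hc_pos
    have hcomb : binEnt t ≤ t * c + Real.log 2 - c * (1/2 - ε/2) := by
      have h4 : c * (1/2 - ε/2) ≤ c / (1 + Real.exp c) := by
        rw [div_eq_mul_one_div c]
        apply mul_le_mul_of_nonneg_left hfrac hc_pos.le
      linarith
    have := mul_le_mul_of_nonneg_left hcomb hα.le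
    calc α * binEnt t ≤ α * (t * c + Real.log 2 - c * (1/2 - ε/2)) := this
      _ = t * (α * c) + α * Real.log 2 - (α * c) * (1/2 - ε/2) := by ring
      _ = t * u + α * Real.log 2 - u * (1/2 - ε/2) := by
          rw [show α * c = u by rw [hc_def]; field_simp]
  -- per-term bound
  have hterm : ∀ t : Set.Ioo (0:ℝ) 1,
      α * binEnt t + Jint (rtβ t β) β - (t : ℝ) * Real.log (rtβ t β)
        ≤ α * Real.log 2 + Jint 1 β - u*ε/4 := by
    intro ⟨t, ht⟩
    simp only
    obtain ⟨r, hr_def⟩ : ∃ x : ℝ, x = rtβ t β := ⟨_, rfl⟩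
    rw [← hr_def]
    have hr_pos : 0 < r := hr_def ▸ rt_pos ht hβ
    have hA := Jint_sub_le hr_pos (Real.exp_pos u) hβ
    rw [Real.log_exp] at hA
    have hid : Real.log (1 + r) - Real.log (1 + r * Real.exp (-β)) = β * t := by
      rw [hr_def]; exact rt_identity ht hβ
    rw [hid, show β * t / β = t by field_simp] at hA
    -- hA : Jint r β - Jint (exp u) β ≤ (log r - u) * t
    have hD := hstepD t ht
    have hts_eq : ts = 1/2 - ε := by rw [hε_def]; ring
    have h6 : 3*u/(2*β) ≤ ε/4 := by
      rw [div_le_iff₀ (by linarith)]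
      nlinarith
    have h7 : u * (ts + 3*u/(2*β)) ≤ u * (1/2 - ε + ε/4) := by
      apply mul_le_mul_of_nonneg_left _ hu_pos.le
      rw [hts_eq]; linarith
    have hA' : Jint r β - t * Real.log r ≤ Jint (Real.exp u) β - t * u := by nlinarith [hA]
    have h8 : Jint (Real.exp u) β ≤ Jint 1 β + u * (1/2 - ε + ε/4) := by linarith [hstepB, h7]
    have h9 : u * (1/2 - ε + ε/4) - u * (1/2 - ε/2) = -(u*ε/4) := by ring
    linarith [hD, hA', h8]
  -- upper bound on the sup
  have hsup_le : (⨆ t : Set.Ioo (0:ℝ) 1,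
      (α * binEnt t + Jint (rtβ t β) β - (t : ℝ) * Real.log (rtβ t β)))
        ≤ α * Real.log 2 + Jint 1 β - u*ε/4 := ciSup_le hterm
  -- lower bound: value at ts
  have hbdd : BddAbove (Set.range (fun t : Set.Ioo (0:ℝ) 1 =>
      α * binEnt t + Jint (rtβ t β) β - (t : ℝ) * Real.log (rtβ t β))) := by
    refine ⟨α * Real.log 2 + Jint 1 β - u*ε/4, ?_⟩
    rintro y ⟨t, rfl⟩
    exact hterm t
  have hlow := le_ciSup hbdd (⟨ts, hts_mem⟩ : Set.Ioo (0:ℝ) 1)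
  rw [hrts, Real.log_one] at hlow
  have hbe_pos : 0 < binEnt ts := by
    have hl1 : Real.log ts < 0 := Real.log_neg hts_pos (by linarith)
    have hl2 : Real.log (1 - ts) < 0 := Real.log_neg (by linarith) (by linarith)
    unfold binEnt
    nlinarith
  constructor
  · have : Jint 1 β < α * binEnt ts + Jint 1 β - ts * 0 := by nlinarith
    linarith
  · have : 0 < u*ε/4 := by positivity
    linarith


theorem scgf_slope_bounds (β : ℝ) (hβ : 0 < β) :
    ∀ α : ℝ, 0 < α →
      (0 < (1 + α) * Jint 1 (β / (1 + α)) - Jint 1 β ∧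
        (1 + α) * Jint 1 (β / (1 + α)) - Jint 1 β < α * Real.log 2) ∧
      (0 < (⨆ t : Set.Ioo (0:ℝ) 1,
            (α * binEnt t + Jint (rtβ t β) β - (t : ℝ) * Real.log (rtβ t β)))
          - Jint 1 β ∧
        (⨆ t : Set.Ioo (0:ℝ) 1,
            (α * binEnt t + Jint (rtβ t β) β - (t : ℝ) * Real.log (rtβ t β)))
          - Jint 1 β < α * Real.log 2) := by
  intro α hα
  exact ⟨part1 hβ hα, part2 hβ hα⟩
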